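/- Let γ ≥ -1/2 be fixed. There exists a constant C = C(γ) > 1 such that C^{-1} (1+ξ)^{-γ-1/2} ≤ ∫_{[0,1]} exp(-ξ(1-s)) dΠ_γ(s) ≤ C (1+ξ)^{-γ-1/2} for all ξ ≥ 0. -/

import Mathlib

open Real MeasureTheory Filter

noncomputable section

/-- The Pochhammer symbol `(a)_k`. -/
def poch (a : ℝ) (k : ℕ) : ℝ := ∏ i ∈ Finset.range k, (a + i)

/-- The Jacobi polynomial `P_n^{α,β}(x)` (valid for arbitrary parameters). -/
def jacobiP (α β : ℝ) (n : ℕ) (x : ℝ) : ℝ :=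
  (n.factorial : ℝ)⁻¹ * ∑ k ∈ Finset.range (n + 1),
    (n.choose k : ℝ) * poch (n + α + β + 1) k * poch (α + k + 1) (n - k) * ((x - 1) / 2) ^ k

/-- The normalizing constants `h_n^{α,β}`. -/
def hconst (α β : ℝ) (n : ℕ) : ℝ :=
  if n = 0 then
    (2 : ℝ) ^ (α + β + 1) * Real.Gamma (α + 1) * Real.Gamma (β + 1) / Real.Gamma (α + β + 2)
  else
    (2 : ℝ) ^ (α + β + 1) * Real.Gamma (n + α + 1) * Real.Gamma (n + β + 1) /
      ((2 * n + α + β + 1) * Real.Gamma (n + α + β + 1) * Real.Gamma (n + 1))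

/-- The Jacobi heat kernel `G_t^{α,β}(x,y)`. -/
def jacobiG (α β t x y : ℝ) : ℝ :=
  ∑' n : ℕ, Real.exp (-t * n * (n + α + β + 1)) * jacobiP α β n x * jacobiP α β n y / hconst α β n

/-- The quantity `Z_t^{α,β}(θ,φ)`. -/
def heatZ (α β t θ φ : ℝ) : ℝ :=
  (t + θ * φ) ^ (-α - 1/2) * (t + (π - θ) * (π - φ)) ^ (-β - 1/2) *
    (1 / Real.sqrt t) * Real.exp (-(θ - φ) ^ 2 / (4 * t))

/-- The constants `𝔠_n^{α,β}`. -/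
def frakC (α β : ℝ) (n : ℕ) : ℝ :=
  if n = 0 then Real.Gamma (α + β + 2) / (Real.sqrt π * Real.Gamma (α + β + 5/2))
  else
    Real.Gamma (α + 1) * Real.Gamma (β + 1) * (2 * n + α + β + 1) *
        Real.Gamma (n + α + β + 1) * Real.Gamma (n + 1) /
      (Real.sqrt π * Real.Gamma (α + β + 5/2) * Real.Gamma (n + α + 1) * Real.Gamma (n + β + 1))

/-- The constants `𝔡_k^{λ}`. -/
def frakD (l : ℝ) (k : ℕ) : ℝ :=
  if k = 0 then Real.Gamma (l + 3/2) / (Real.sqrt π * Real.Gamma (l + 2))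
  else
    (2 * k + 2 * l + 1) * Real.Gamma (k + 2 * l + 1) /
      ((2 : ℝ) ^ (2 * l + 1) * Real.Gamma (l + 2) * Real.Gamma (k + l + 1))

/-- The argument `u sin(θ/2) sin(φ/2) + v cos(θ/2) cos(φ/2)`. -/
def mix (θ φ u v : ℝ) : ℝ :=
  u * Real.sin (θ / 2) * Real.sin (φ / 2) + v * Real.cos (θ / 2) * Real.cos (φ / 2)

/-- `Φ_k^{λ}(θ,φ,u,v)`, with the convention that it vanishes for `k < 0`. -/
def PhiZ (k : ℤ) (l θ φ u v : ℝ) : ℝ :=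
  if k < 0 then 0 else frakD l k.toNat * jacobiP l l k.toNat (mix θ φ u v)

/-- The density of the measure `dΠ_α` for `α > -1/2`. -/
def piDens (α u : ℝ) : ℝ :=
  Real.Gamma (α + 1) / (Real.sqrt π * Real.Gamma (α + 1/2)) * (1 - u ^ 2) ^ (α - 1/2)

/-- Integration against `dΠ_α` over `[-1,1]`; for `α = -1/2` the measure is `(δ_{-1}+δ_1)/2`. -/
def piInt (α : ℝ) (f : ℝ → ℝ) : ℝ :=
  if α = -1/2 then (f (-1) + f 1) / 2 else ∫ u in (-1 : ℝ)..1, f u * piDens α u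

/-- Integration against `dΠ_γ` over `[0,1]`; for `γ = -1/2` this gives `f 1 / 2`. -/
def piInt01 (γ : ℝ) (f : ℝ → ℝ) : ℝ :=
  if γ = -1/2 then f 1 / 2 else ∫ s in (0 : ℝ)..1, f s * piDens γ s

/-- The function `Π_α(u)`. -/
def PiFun (α u : ℝ) : ℝ :=
  Real.Gamma (α + 1) / (Real.sqrt π * Real.Gamma (α + 1/2)) *
    ∫ w in (0 : ℝ)..u, (1 - w ^ 2) ^ (α - 1/2)

/-- The auxiliary function `H_t^{λ}(x)`. -/
def Hfun (l t x : ℝ) : ℝ :=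
  ∑' n : ℕ, Real.exp (-t * (2 * n) * (2 * n + 2 * l + 1)) * frakD l (2 * n) * jacobiP l l (2 * n) x

/-- The Jacobi differential operator `J^{α,β}` acting on functions of one real variable. -/
def Jop (α β : ℝ) (f : ℝ → ℝ) (x : ℝ) : ℝ :=
  -(1 - x ^ 2) * deriv (deriv f) x - (β - α - (α + β + 2) * x) * deriv f x
noncomputable section

lemma aux_rpow_bound {x b : ℝ} (h1 : 1 ≤ x) (h2 : x ≤ 2) :
    min 1 ((2:ℝ) ^ b) ≤ x ^ b ∧ x ^ b ≤ max 1 ((2:ℝ) ^ b) := by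
  rcases le_total 0 b with hb | hb
  · constructor
    · exact le_trans (min_le_left _ _) (Real.one_le_rpow h1 hb)
    · exact le_trans (Real.rpow_le_rpow (by linarith) h2 hb) (le_max_right _ _)
  · constructor
    · exact le_trans (min_le_right _ _) (Real.rpow_le_rpow_of_nonpos (by linarith) h2 hb)
    · refine le_trans ?_ (le_max_left _ _)
      calc x ^ b ≤ 1 ^ b := Real.rpow_le_rpow_of_nonpos one_pos h1 hb
        _ = 1 := Real.one_rpow b

/-- auxiliary integrand -/
def auxF (p ξ t : ℝ) : ℝ := t ^ (p - 1) * Real.exp (-(ξ * t))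

lemma auxF_nonneg {p ξ t : ℝ} (ht : 0 ≤ t) : 0 ≤ auxF p ξ t :=
  mul_nonneg (Real.rpow_nonneg ht _) (Real.exp_nonneg _)

lemma auxF_intervalIntegrable {p : ℝ} (hp : 0 < p) (ξ a b : ℝ) :
    IntervalIntegrable (auxF p ξ) volume a b :=
  (intervalIntegral.intervalIntegrable_rpow' (by linarith)).mul_continuousOn
    (Real.continuous_exp.comp (continuous_const.mul continuous_id).neg).continuousOn

lemma auxJ_lower {p : ℝ} (hp : 0 < p) {ξ : ℝ} (hξ : 0 ≤ ξ) :
    Real.exp (-1) / p * (1 + ξ) ^ (-p) ≤ ∫ t in (0:ℝ)..1, auxF p ξ t := by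
  have h1ξ : (0:ℝ) < 1 + ξ := by linarith
  set δ : ℝ := (1 + ξ)⁻¹ with hδ_def
  have hδ0 : 0 < δ := inv_pos.mpr h1ξ
  have hδ1 : δ ≤ 1 := by
    rw [hδ_def, show (1:ℝ) = (1:ℝ)⁻¹ by norm_num]
    exact inv_anti₀ one_pos (by linarith)
  have hδp : δ ^ p = (1 + ξ) ^ (-p) := by
    rw [hδ_def, Real.inv_rpow h1ξ.le, ← Real.rpow_neg h1ξ.le]
  have hsplit : ∫ t in (0:ℝ)..δ, auxF p ξ t ≤ ∫ t in (0:ℝ)..1, auxF p ξ t := by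
    have hadd := intervalIntegral.integral_add_adjacent_intervals
      (auxF_intervalIntegrable hp ξ 0 δ) (auxF_intervalIntegrable hp ξ δ 1)
    have hpos : 0 ≤ ∫ t in δ..1, auxF p ξ t :=
      intervalIntegral.integral_nonneg hδ1 (fun u hu => auxF_nonneg (le_trans hδ0.le hu.1))
    linarith [hadd]
  refine le_trans ?_ hsplit
  have hmono : ∫ t in (0:ℝ)..δ, Real.exp (-1) * t ^ (p - 1) ≤ ∫ t in (0:ℝ)..δ, auxF p ξ t := by
    refine intervalIntegral.integral_mono_on hδ0.le
      ((intervalIntegral.intervalIntegrable_rpow' (by linarith)).const_mul _)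
      (auxF_intervalIntegrable hp ξ 0 δ) (fun t ht => ?_)
    have hξt : ξ * t ≤ 1 := by
      have h1 : ξ * t ≤ ξ * δ := mul_le_mul_of_nonneg_left ht.2 hξ
      have h2 : ξ * δ ≤ 1 := by
        rw [hδ_def, mul_inv_le_iff₀ h1ξ]
        linarith
      linarith
    rw [auxF, mul_comm (Real.exp (-1))]
    refine mul_le_mul_of_nonneg_left ?_ (Real.rpow_nonneg ht.1 _)
    exact Real.exp_le_exp.mpr (by linarith)
  refine le_trans (le_of_eq ?_) hmono
  rw [intervalIntegral.integral_const_mul, integral_rpow (Or.inl (by linarith : (-1:ℝ) < p - 1))]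
  rw [show p - 1 + 1 = p by ring, Real.zero_rpow hp.ne', hδp]
  ring

lemma auxJ_upper {p : ℝ} (hp : 0 < p) {ξ : ℝ} (hξ : 0 ≤ ξ) :
    ∫ t in (0:ℝ)..1, auxF p ξ t ≤ (max (1/p) (Real.Gamma p)) * 2 ^ p * (1 + ξ) ^ (-p) := by
  have h1ξ : (0:ℝ) < 1 + ξ := by linarith
  have h2p : (0:ℝ) < (2:ℝ) ^ p := Real.rpow_pos_of_pos two_pos p
  rcases le_total ξ 1 with hξ1 | hξ1
  · -- small ξ
    have hJ : ∫ t in (0:ℝ)..1, auxF p ξ t ≤ 1 / p := by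
      have hmono : ∫ t in (0:ℝ)..1, auxF p ξ t ≤ ∫ t in (0:ℝ)..1, t ^ (p - 1) := by
        refine intervalIntegral.integral_mono_on zero_le_one
          (auxF_intervalIntegrable hp ξ 0 1)
          (intervalIntegral.intervalIntegrable_rpow' (by linarith)) (fun t ht => ?_)
        rw [auxF]
        have : Real.exp (-(ξ * t)) ≤ 1 := by
          rw [show (1:ℝ) = Real.exp 0 from (Real.exp_zero).symm]
          exact Real.exp_le_exp.mpr (by nlinarith [mul_nonneg hξ ht.1])
        calc t ^ (p - 1) * Real.exp (-(ξ * t)) ≤ t ^ (p - 1) * 1 :=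
              mul_le_mul_of_nonneg_left this (Real.rpow_nonneg ht.1 _)
          _ = t ^ (p - 1) := mul_one _
      rw [integral_rpow (Or.inl (by linarith : (-1:ℝ) < p - 1))] at hmono
      rw [show p - 1 + 1 = p by ring, Real.one_rpow, Real.zero_rpow hp.ne'] at hmono
      linarith
    have hw : (2:ℝ) ^ (-p) ≤ (1 + ξ) ^ (-p) :=
      Real.rpow_le_rpow_of_nonpos h1ξ (by linarith) (by linarith)
    have h2 : (2:ℝ) ^ (-p) = ((2:ℝ) ^ p)⁻¹ := Real.rpow_neg (by norm_num) p
    calc ∫ t in (0:ℝ)..1, auxF p ξ t ≤ 1 / p := hJ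
      _ = (1/p) * 2 ^ p * (2:ℝ) ^ (-p) := by rw [h2]; field_simp
      _ ≤ (1/p) * 2 ^ p * (1 + ξ) ^ (-p) := by
          exact mul_le_mul_of_nonneg_left hw (by positivity)
      _ ≤ (max (1/p) (Real.Gamma p)) * 2 ^ p * (1 + ξ) ^ (-p) := by
          have := Real.rpow_nonneg h1ξ.le (-p)
          exact mul_le_mul_of_nonneg_right
            (mul_le_mul_of_nonneg_right (le_max_left _ _) h2p.le) this
  · -- large ξ
    have hξ0 : (0:ℝ) < ξ := by linarith
    have hIoi : IntegrableOn (auxF p ξ) (Set.Ioi 0) volume := by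
      have := integrableOn_rpow_mul_exp_neg_mul_rpow
        (by linarith : (-1:ℝ) < p - 1) (zero_lt_one' ℝ) hξ0
      simp only [Real.rpow_one, neg_mul] at this
      exact this
    have hJ : ∫ t in (0:ℝ)..1, auxF p ξ t ≤ ∫ t in Set.Ioi (0:ℝ), auxF p ξ t := by
      rw [intervalIntegral.integral_of_le zero_le_one]
      refine setIntegral_mono_set hIoi ?_ (HasSubset.Subset.eventuallyLE Set.Ioc_subset_Ioi_self)
      exact (ae_restrict_iff' measurableSet_Ioi).mpr
        (Filter.Eventually.of_forall fun t ht => auxF_nonneg (le_of_lt ht))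
    have hval : ∫ t in Set.Ioi (0:ℝ), auxF p ξ t = (1/ξ) ^ p * Real.Gamma p :=
      Real.integral_rpow_mul_exp_neg_mul_Ioi hp hξ0
    have hbound : (1/ξ) ^ p ≤ 2 ^ p * (1 + ξ) ^ (-p) := by
      have e1 : (1/ξ) ^ p = ξ ^ (-p) := by
        rw [one_div, Real.inv_rpow hξ0.le, ← Real.rpow_neg hξ0.le]
      have e2 : ((2:ℝ) * ξ) ^ (-p) ≤ (1 + ξ) ^ (-p) :=
        Real.rpow_le_rpow_of_nonpos h1ξ (by linarith) (by linarith)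
      have e3 : ((2:ℝ) * ξ) ^ (-p) = (2:ℝ) ^ (-p) * ξ ^ (-p) :=
        Real.mul_rpow (by norm_num) hξ0.le
      have h2 : (2:ℝ) ^ (-p) = ((2:ℝ) ^ p)⁻¹ := Real.rpow_neg (by norm_num) p
      rw [e1]
      have : ξ ^ (-p) = 2 ^ p * ((2:ℝ) * ξ) ^ (-p) := by
        rw [e3, h2]; field_simp
      rw [this]
      exact mul_le_mul_of_nonneg_left e2 h2p.le
    calc ∫ t in (0:ℝ)..1, auxF p ξ t ≤ (1/ξ) ^ p * Real.Gamma p := by rw [← hval]; exact hJ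
      _ ≤ (2 ^ p * (1 + ξ) ^ (-p)) * Real.Gamma p :=
          mul_le_mul_of_nonneg_right hbound (Real.Gamma_pos_of_pos hp).le
      _ ≤ (max (1/p) (Real.Gamma p)) * 2 ^ p * (1 + ξ) ^ (-p) := by
          have := Real.rpow_nonneg h1ξ.le (-p)
          calc 2 ^ p * (1 + ξ) ^ (-p) * Real.Gamma p
              = Real.Gamma p * 2 ^ p * (1 + ξ) ^ (-p) := by ring
            _ ≤ (max (1/p) (Real.Gamma p)) * 2 ^ p * (1 + ξ) ^ (-p) :=
              mul_le_mul_of_nonneg_right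
                (mul_le_mul_of_nonneg_right (le_max_right _ _) h2p.le) this

/-- Lemma 5.5: for fixed `γ ≥ -1/2`,
`∫_{[0,1]} exp(-ξ(1-s)) dΠ_γ(s) ≍ (1+ξ)^{-γ-1/2}` uniformly in `ξ ≥ 0`. -/
theorem piInt01_exp_estimate (γ : ℝ) (hγ : γ ≥ -1/2) :
    ∃ C : ℝ, C > 1 ∧ ∀ ξ : ℝ, 0 ≤ ξ →
      C⁻¹ * (1 + ξ) ^ (-γ - 1/2) ≤ piInt01 γ (fun s => Real.exp (-ξ * (1 - s))) ∧
      piInt01 γ (fun s => Real.exp (-ξ * (1 - s))) ≤ C * (1 + ξ) ^ (-γ - 1/2) := by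
  rcases eq_or_lt_of_le hγ with hEq | hlt
  · refine ⟨2, one_lt_two, fun ξ hξ => ?_⟩
    subst hEq
    norm_num [piInt01]
  · -- γ > -1/2
    set p : ℝ := γ + 1/2 with hp_def
    have hp : 0 < p := by rw [hp_def]; linarith
    have ha : (-1:ℝ) < p - 1 := by linarith
    set c : ℝ := Real.Gamma (γ + 1) / (Real.sqrt π * Real.Gamma (γ + 1/2)) with hc_def
    have hπ : 0 < Real.sqrt π := Real.sqrt_pos.mpr Real.pi_pos
    have hc : 0 < c := by
      rw [hc_def]
      exact div_pos (Real.Gamma_pos_of_pos (by linarith))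
        (mul_pos hπ (Real.Gamma_pos_of_pos (by linarith)))
    set m : ℝ := min 1 ((2:ℝ) ^ (p - 1)) with hm_def
    set M : ℝ := max 1 ((2:ℝ) ^ (p - 1)) with hM_def
    have hm : 0 < m := lt_min one_pos (Real.rpow_pos_of_pos two_pos _)
    have hM : 0 < M := lt_of_lt_of_le one_pos (le_max_left _ _)
    set LJ : ℝ := Real.exp (-1) / p with hLJ_def
    set UJ : ℝ := (max (1/p) (Real.Gamma p)) * 2 ^ p with hUJ_def
    have hLJ : 0 < LJ := div_pos (Real.exp_pos _) hp
    have hUJ : 0 < UJ := by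
      rw [hUJ_def]
      exact mul_pos (lt_of_lt_of_le (by positivity : (0:ℝ) < 1/p) (le_max_left _ _))
        (Real.rpow_pos_of_pos two_pos _)
    set L : ℝ := c * m * LJ with hL_def
    set U : ℝ := c * M * UJ with hU_def
    have hL : 0 < L := mul_pos (mul_pos hc hm) hLJ
    have hU : 0 < U := mul_pos (mul_pos hc hM) hUJ
    have key : ∀ ξ : ℝ, 0 ≤ ξ →
        L * (1 + ξ) ^ (-p) ≤ piInt01 γ (fun s => Real.exp (-ξ * (1 - s))) ∧
        piInt01 γ (fun s => Real.exp (-ξ * (1 - s))) ≤ U * (1 + ξ) ^ (-p) := by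
      intro ξ hξ
      have h1ξ : (0:ℝ) < 1 + ξ := by linarith
      have hw : (0:ℝ) ≤ (1 + ξ) ^ (-p) := Real.rpow_nonneg h1ξ.le _
      have hne : ¬ γ = -1/2 := by intro h; rw [h] at hlt; exact lt_irrefl _ hlt
      have hI : piInt01 γ (fun s => Real.exp (-ξ * (1 - s)))
          = ∫ s in (0:ℝ)..1, Real.exp (-ξ * (1 - s)) * piDens γ s := by
        rw [piInt01, if_neg hne]
      have hcong : ∫ s in (0:ℝ)..1, Real.exp (-ξ * (1 - s)) * piDens γ s
          = c * ∫ s in (0:ℝ)..1, auxF p ξ (1 - s) * (1 + s) ^ (p - 1) := by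
        rw [← intervalIntegral.integral_const_mul]
        apply intervalIntegral.integral_congr
        intro s hs
        rw [Set.uIcc_of_le zero_le_one] at hs
        have h0s : (0:ℝ) ≤ 1 - s := by linarith [hs.2]
        have h1s : (0:ℝ) ≤ 1 + s := by linarith [hs.1]
        simp only [piDens, auxF]
        rw [show γ - 1/2 = p - 1 by rw [hp_def]; ring,
          show 1 - s^2 = (1 - s) * (1 + s) by ring, Real.mul_rpow h0s h1s,
          ← hc_def, neg_mul]
        ring
      -- integrability
      have hcomp_int : IntervalIntegrable (fun s => auxF p ξ (1 - s)) volume 0 1 := by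
        simpa using ((auxF_intervalIntegrable hp ξ 0 1).comp_sub_left 1).symm
      have hcont : ContinuousOn (fun s : ℝ => (1 + s) ^ (p - 1)) (Set.uIcc 0 1) := by
        refine ContinuousOn.rpow_const
          ((continuous_const.add continuous_id).continuousOn) (fun x hx => ?_)
        rw [Set.uIcc_of_le zero_le_one] at hx
        exact Or.inl (by nlinarith [hx.1])
      have hmid_int : IntervalIntegrable
          (fun s => auxF p ξ (1 - s) * (1 + s) ^ (p - 1)) volume 0 1 :=
        hcomp_int.mul_continuousOn hcont
      have hcomp_eq : ∫ s in (0:ℝ)..1, auxF p ξ (1 - s) = ∫ t in (0:ℝ)..1, auxF p ξ t := by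
        simpa using intervalIntegral.integral_comp_sub_left (f := auxF p ξ)
          (a := 0) (b := 1) 1
      have hcompnn : ∀ s ∈ Set.Icc (0:ℝ) 1, 0 ≤ auxF p ξ (1 - s) :=
        fun s hs => auxF_nonneg (by linarith [hs.2])
      -- monotone bounds
      have hlow : m * ∫ t in (0:ℝ)..1, auxF p ξ t
          ≤ ∫ s in (0:ℝ)..1, auxF p ξ (1 - s) * (1 + s) ^ (p - 1) := by
        rw [← hcomp_eq, ← intervalIntegral.integral_const_mul]
        refine intervalIntegral.integral_mono_on zero_le_one
          (hcomp_int.const_mul m) hmid_int (fun s hs => ?_)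
        have hb := (aux_rpow_bound (b := p - 1) (by linarith [hs.1] : (1:ℝ) ≤ 1 + s)
          (by linarith [hs.2] : (1:ℝ) + s ≤ 2)).1
        rw [mul_comm m]
        exact mul_le_mul_of_nonneg_left hb (hcompnn s hs)
      have hhigh : ∫ s in (0:ℝ)..1, auxF p ξ (1 - s) * (1 + s) ^ (p - 1)
          ≤ M * ∫ t in (0:ℝ)..1, auxF p ξ t := by
        rw [← hcomp_eq, ← intervalIntegral.integral_const_mul]
        refine intervalIntegral.integral_mono_on zero_le_one
          hmid_int (hcomp_int.const_mul M) (fun s hs => ?_)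
        have hb := (aux_rpow_bound (b := p - 1) (by linarith [hs.1] : (1:ℝ) ≤ 1 + s)
          (by linarith [hs.2] : (1:ℝ) + s ≤ 2)).2
        rw [mul_comm M]
        exact mul_le_mul_of_nonneg_left hb (hcompnn s hs)
      have hJlow := auxJ_lower hp hξ
      have hJhigh := auxJ_upper hp hξ
      rw [hI, hcong]
      constructor
      · have h1 : c * m * (LJ * (1 + ξ) ^ (-p)) ≤ c * m * ∫ t in (0:ℝ)..1, auxF p ξ t :=
          mul_le_mul_of_nonneg_left hJlow (by positivity)
        have h2 : c * (m * ∫ t in (0:ℝ)..1, auxF p ξ t)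
            ≤ c * ∫ s in (0:ℝ)..1, auxF p ξ (1 - s) * (1 + s) ^ (p - 1) :=
          mul_le_mul_of_nonneg_left hlow hc.le
        have e : L * (1 + ξ) ^ (-p) = c * m * (LJ * (1 + ξ) ^ (-p)) := by
          rw [hL_def]; ring
        have e2 : c * m * ∫ t in (0:ℝ)..1, auxF p ξ t
            = c * (m * ∫ t in (0:ℝ)..1, auxF p ξ t) := by ring
        linarith
      · have h2 : c * ∫ s in (0:ℝ)..1, auxF p ξ (1 - s) * (1 + s) ^ (p - 1)
            ≤ c * (M * ∫ t in (0:ℝ)..1, auxF p ξ t) :=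
          mul_le_mul_of_nonneg_left hhigh hc.le
        have h1 : c * M * ∫ t in (0:ℝ)..1, auxF p ξ t
            ≤ c * M * (UJ * (1 + ξ) ^ (-p)) :=
          mul_le_mul_of_nonneg_left hJhigh (by positivity)
        have e : U * (1 + ξ) ^ (-p) = c * M * (UJ * (1 + ξ) ^ (-p)) := by
          rw [hU_def]; ring
        have e2 : c * M * ∫ t in (0:ℝ)..1, auxF p ξ t
            = c * (M * ∫ t in (0:ℝ)..1, auxF p ξ t) := by ring
        linarith
    refine ⟨max L⁻¹ U + 1, ?_, fun ξ hξ => ?_⟩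
    · have : 0 < max L⁻¹ U := lt_max_iff.mpr (Or.inl (inv_pos.mpr hL))
      linarith
    · have h1ξ : (0:ℝ) < 1 + ξ := by linarith
      have hw : (0:ℝ) ≤ (1 + ξ) ^ (-p) := Real.rpow_nonneg h1ξ.le _
      have hexp : -γ - 1/2 = -p := by rw [hp_def]; ring
      rw [hexp]
      obtain ⟨k1, k2⟩ := key ξ hξ
      have hCL : (max L⁻¹ U + 1)⁻¹ ≤ L := by
        have h1 : L⁻¹ ≤ max L⁻¹ U + 1 := by
          have := le_max_left L⁻¹ U; linarith
        calc (max L⁻¹ U + 1)⁻¹ ≤ (L⁻¹)⁻¹ := inv_anti₀ (inv_pos.mpr hL) h1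
          _ = L := inv_inv L
      have hCU : U ≤ max L⁻¹ U + 1 := by
        have := le_max_right L⁻¹ U; linarith
      constructor
      · exact le_trans (mul_le_mul_of_nonneg_right hCL hw) k1
      · exact le_trans k2 (mul_le_mul_of_nonneg_right hCU hw)
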